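/- If x ∈ M₂(ℂ) is hermitian (x* = x) with tr(x) = 0, then ‖x‖² = Re(tr(x* x))/2, and for every t ∈ ℝ one has ‖t·1 + x‖ = |t| + ‖x‖. (Thus the hermitian 2×2 matrices decompose as ℝ·1 ⊕¹ H, where H, the traceless hermitian matrices, is a real Hilbert space whose norm is the normalized Hilbert–Schmidt norm.) -/

import Mathlib

lemma aux_sq (x : Matrix (Fin 2) (Fin 2) ℂ)
    (h11 : x 1 1 = - x 0 0) (h10 : x 1 0 = (starRingEnd ℂ) (x 0 1))
    (R : ℝ)
    (hc : x 0 0 * x 0 0 + x 0 1 * (starRingEnd ℂ) (x 0 1) = (R : ℂ)) :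
    x * x = (R : ℂ) • (1 : Matrix (Fin 2) (Fin 2) ℂ) := by
  rw [Matrix.eta_fin_two x, h11, h10, Matrix.one_fin_two, Matrix.mul_fin_two,
    Matrix.smul_of]
  congr 1
  ext i j
  fin_cases i <;> fin_cases j <;> simp
  · exact hc
  · show x 0 0 * x 0 1 + -(x 0 1 * x 0 0) = 0
    ring
  · show (starRingEnd ℂ) (x 0 1) * x 0 0 + -(x 0 0 * (starRingEnd ℂ) (x 0 1)) = 0
    ring
  · show (starRingEnd ℂ) (x 0 1) * x 0 1 + x 0 0 * x 0 0 = (R : ℂ)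
    linear_combination hc

lemma aux_low (x : Matrix (Fin 2) (Fin 2) ℂ) (R : ℝ)
    (hsq : x * x = (R : ℂ) • (1 : Matrix (Fin 2) (Fin 2) ℂ))
    (h11 : x 1 1 = - x 0 0)
    (c : ℂ) (hcc : c * c = (R : ℂ)) (hcne : c ≠ 0) (t : ℂ) :
    ∃ v : Fin 2 → ℂ, v ≠ 0 ∧
      (t • (1 : Matrix (Fin 2) (Fin 2) ℂ) + x).mulVec v = (t + c) • v := by
  have eig : ∀ u : Fin 2 → ℂ,
      x.mulVec (x.mulVec u + c • u) = c • (x.mulVec u + c • u) := by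
    intro u
    rw [Matrix.mulVec_add, Matrix.mulVec_smul, Matrix.mulVec_mulVec, hsq,
      Matrix.smul_mulVec, Matrix.one_mulVec, smul_add, smul_smul, hcc]
    exact add_comm _ _
  have key : ∃ v : Fin 2 → ℂ, v ≠ 0 ∧ x.mulVec v = c • v := by
    by_cases hu0 : x.mulVec (Pi.single 0 1 : Fin 2 → ℂ) + c • (Pi.single 0 1 : Fin 2 → ℂ) = (0 : Fin 2 → ℂ)
    · by_cases hu1 : x.mulVec (Pi.single 1 1 : Fin 2 → ℂ) + c • (Pi.single 1 1 : Fin 2 → ℂ) = (0 : Fin 2 → ℂ)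
      · exfalso
        have e0 : x 0 0 + c = 0 := by
          have := congrFun hu0 0
          simpa [Matrix.mulVec, dotProduct, Fin.sum_univ_two, Pi.single_apply]
            using this
        have e1 : x 1 1 + c = 0 := by
          have := congrFun hu1 1
          simpa [Matrix.mulVec, dotProduct, Fin.sum_univ_two, Pi.single_apply]
            using this
        have h2c : (2 : ℂ) * c = 0 := by linear_combination e0 + e1 - h11
        exact hcne ((mul_eq_zero.mp h2c).resolve_left two_ne_zero)
      · exact ⟨_, hu1, eig _⟩
    · exact ⟨_, hu0, eig _⟩
  obtain ⟨v, hv0, hveig⟩ := key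
  refine ⟨v, hv0, ?_⟩
  rw [Matrix.add_mulVec, Matrix.smul_mulVec, Matrix.one_mulVec, hveig, add_smul]

open scoped Matrix.Norms.L2Operator

/-- For a hermitian `2 × 2` complex matrix `x` with zero trace one has
`‖x‖² = Re (tr (x* x)) / 2` and `‖t•1 + x‖ = |t| + ‖x‖` for every real `t`,
where the norm is the C*-norm (the operator norm induced by the Euclidean
norm on `ℂ²`).  Thus the hermitian matrices decompose as `ℝ·1 ⊕¹ H`, with
`H` the traceless hermitian matrices equipped with the normalized
Hilbert–Schmidt norm. -/
theorem stmt1 (x : Matrix (Fin 2) (Fin 2) ℂ)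
    (hherm : x.conjTranspose = x) (htr : x.trace = 0) :
    ‖x‖ ^ 2 = ((x.conjTranspose * x).trace.re) / 2 ∧
    ∀ t : ℝ, ‖(t : ℂ) • (1 : Matrix (Fin 2) (Fin 2) ℂ) + x‖ = |t| + ‖x‖ := by
  have h11 : x 1 1 = - x 0 0 := by
    have h := htr; rw [Matrix.trace_fin_two] at h; linear_combination h
  have h10 : x 1 0 = (starRingEnd ℂ) (x 0 1) := by
    have := congrFun (congrFun hherm 1) 0
    simpa [Matrix.conjTranspose_apply, Complex.star_def] using this.symm
  have h00 : (starRingEnd ℂ) (x 0 0) = x 0 0 := by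
    have := congrFun (congrFun hherm 0) 0
    simpa [Matrix.conjTranspose_apply, Complex.star_def] using this
  have hre : x 0 0 = ((x 0 0).re : ℂ) := (Complex.conj_eq_iff_re.mp h00) ▸ rfl
  obtain ⟨R, hRnn, hc⟩ : ∃ R : ℝ, 0 ≤ R ∧
      x 0 0 * x 0 0 + x 0 1 * (starRingEnd ℂ) (x 0 1) = (R : ℂ) := by
    refine ⟨(x 0 0).re ^ 2 + Complex.normSq (x 0 1),
      add_nonneg (sq_nonneg _) (Complex.normSq_nonneg _), ?_⟩
    have ha : x 0 0 * x 0 0 = (((x 0 0).re ^ 2 : ℝ) : ℂ) := by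
      conv_lhs => rw [hre]
      push_cast
      ring
    rw [ha, Complex.mul_conj]
    push_cast
    ring
  have hsq : x * x = (R : ℂ) • (1 : Matrix (Fin 2) (Fin 2) ℂ) := aux_sq x h11 h10 R hc
  have hxx : x.conjTranspose * x = (R : ℂ) • (1 : Matrix (Fin 2) (Fin 2) ℂ) := by
    rw [hherm, hsq]
  have hnorm1 : ‖(1 : Matrix (Fin 2) (Fin 2) ℂ)‖ = 1 := CStarRing.norm_one
  have hn2 : ‖x‖ ^ 2 = R := by
    have h1 : ‖x.conjTranspose * x‖ = ‖x‖ * ‖x‖ := Matrix.l2_opNorm_conjTranspose_mul_self x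
    rw [hxx, norm_smul, hnorm1] at h1
    have h2 : ‖(R : ℂ)‖ = R := by
      rw [Complex.norm_real, Real.norm_eq_abs, abs_of_nonneg hRnn]
    rw [h2, mul_one] at h1
    rw [sq, ← h1]
  have htrace : ((x.conjTranspose * x).trace.re) = 2 * R := by
    rw [hxx]
    simp [Matrix.trace_fin_two, Matrix.one_apply]
    ring
  refine ⟨by rw [hn2, htrace]; ring, ?_⟩
  intro t
  have hlamnn : (0 : ℝ) ≤ ‖x‖ := norm_nonneg x
  have hupper : ‖(t : ℂ) • (1 : Matrix (Fin 2) (Fin 2) ℂ) + x‖ ≤ |t| + ‖x‖ := by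
    calc ‖(t : ℂ) • (1 : Matrix (Fin 2) (Fin 2) ℂ) + x‖
        ≤ ‖(t : ℂ) • (1 : Matrix (Fin 2) (Fin 2) ℂ)‖ + ‖x‖ := norm_add_le _ _
      _ = |t| + ‖x‖ := by rw [norm_smul, hnorm1, mul_one, Complex.norm_real,
          Real.norm_eq_abs]
  by_cases hx0 : x = 0
  · have hl0 : ‖x‖ = 0 := by rw [hx0, norm_zero]
    rw [hx0, add_zero, norm_smul, hnorm1, mul_one, Complex.norm_real, Real.norm_eq_abs,
      norm_zero, add_zero]
  · have hlampos : 0 < ‖x‖ := by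
      rcases lt_or_eq_of_le hlamnn with h | h
      · exact h
      · exact absurd (norm_eq_zero.mp h.symm) hx0
    obtain ⟨c, μ, hcc, hcne, hμc, habsμ⟩ : ∃ (c : ℂ) (μ : ℝ), c * c = (R : ℂ) ∧ c ≠ 0 ∧
        (t : ℂ) + c = (μ : ℂ) ∧ |μ| = |t| + ‖x‖ := by
      by_cases h : 0 ≤ t
      · refine ⟨((‖x‖ : ℝ) : ℂ), t + ‖x‖, ?_, ?_, by push_cast; ring, ?_⟩
        · rw [← Complex.ofReal_mul, ← sq, hn2]
        · simpa using ne_of_gt hlampos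
        · rw [abs_of_nonneg h, abs_of_nonneg (by linarith)]
      · refine ⟨((-‖x‖ : ℝ) : ℂ), t - ‖x‖, ?_, ?_, by push_cast; ring, ?_⟩
        · rw [← Complex.ofReal_mul]
          congr 1
          rw [← hn2]
          ring
        · simpa using ne_of_gt hlampos
        · push_neg at h
          rw [abs_of_neg h, abs_of_nonpos (by linarith)]
          ring
    obtain ⟨v, hv0, hveig⟩ := aux_low x R hsq h11 c hcc hcne (t : ℂ)
    set V : EuclideanSpace ℂ (Fin 2) := (EuclideanSpace.equiv (Fin 2) ℂ).symm v with hV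
    have hVnorm : 0 < ‖V‖ := by
      rw [norm_pos_iff]
      intro h
      exact hv0 (by simpa [hV] using congrArg (EuclideanSpace.equiv (Fin 2) ℂ) h)
    set y := (t : ℂ) • (1 : Matrix (Fin 2) (Fin 2) ℂ) + x with hy
    have hle : |μ| * ‖V‖ ≤ ‖y‖ * ‖V‖ := by
      have h := Matrix.l2_opNorm_mulVec y V
      have h2 : ((EuclideanSpace.equiv (Fin 2) ℂ).symm (y.mulVec V) : EuclideanSpace ℂ (Fin 2))
          = ((μ : ℝ) : ℂ) • V := by
        show (EuclideanSpace.equiv (Fin 2) ℂ).symm (y.mulVec v) = _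
        rw [hy, hveig, hμc, hV]
        exact (EuclideanSpace.equiv (Fin 2) ℂ).symm.map_smul _ _
      rw [h2, norm_smul, Complex.norm_real, Real.norm_eq_abs] at h
      exact h
    have hlow : |μ| ≤ ‖y‖ := le_of_mul_le_mul_right hle hVnorm
    rw [habsμ] at hlow
    exact le_antisymm hupper hlow
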